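/- For every positive integer m and every prime p not dividing m, \sum_{k=1}^{p-1} B_k \cdot (-m)^{-k} \equiv (-1)^{m-1} S_{m-1} \pmod{p}, where the inverse of (-m) is taken modulo p. -/

import Mathlib

open Finset

/-- The Bell numbers: `B₀ = 1` and `B_{n+1} = ∑_{k=0}^{n} C(n,k)·B_k`. -/
def bell : ℕ → ℕ
  | 0 => 1
  | n + 1 => ∑ k ∈ (Finset.range (n + 1)).attach,
      n.choose k.val * bell k.val
decreasing_by exact Finset.mem_range.mp k.2

lemma bell_succ (n : ℕ) :
    bell (n + 1) = ∑ k ∈ Finset.range (n + 1), n.choose k * bell k := by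
  rw [bell]
  exact Finset.sum_attach (Finset.range (n+1)) (fun k => n.choose k * bell k)

namespace SZ

variable (p : ℕ) [Fact p.Prime]

noncomputable def A (n : ℕ) : ZMod p :=
  ∑ s ∈ range (n + 1), (-1 : ZMod p) ^ s * ((s.factorial : ZMod p))⁻¹

noncomputable def w (i : ℕ) : ZMod p := ((i.factorial : ZMod p))⁻¹ * A p (p - 1 - i)

noncomputable def V (k : ℕ) : ZMod p := ∑ i ∈ range p, w p i * (i : ZMod p) ^ k

lemma natCast_ne_zero {i : ℕ} (h0 : 0 < i) (h : i < p) : (i : ZMod p) ≠ 0 := by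
  rw [Ne, ZMod.natCast_eq_zero_iff]
  intro hd
  exact absurd (Nat.le_of_dvd h0 hd) (by omega)

lemma fact_ne_zero {i : ℕ} (h : i < p) : ((i.factorial : ℕ) : ZMod p) ≠ 0 := by
  rw [Ne, ZMod.natCast_eq_zero_iff]
  intro hd
  exact absurd ((Nat.Prime.dvd_factorial (Fact.out)).mp hd) (by omega)

lemma fact_mul_fact {i : ℕ} (h : i ≤ p - 1) :
    ((i.factorial : ℕ) : ZMod p) * (((p - 1 - i).factorial : ℕ) : ZMod p) = (-1) ^ (i + 1) := by
  induction i with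
  | zero => simpa using ZMod.wilsons_lemma p
  | succ i ih =>
    have hp2 := (Fact.out : p.Prime).two_le
    have ih' := ih (by omega)
    have h3 : p - 1 - i = (p - 1 - (i + 1)) + 1 := by omega
    rw [h3] at ih'
    have hc : ((p - 1 - (i + 1) : ℕ) : ZMod p) + 1 = -((i : ZMod p) + 1) := by
      have h4 : (p - 1 - (i + 1) + 1) + (i + 1) = p := by omega
      have h5 : ((p - 1 - (i+1) + 1 : ℕ) : ZMod p) + ((i + 1 : ℕ) : ZMod p) = (p : ZMod p) := by
        rw [← Nat.cast_add, h4]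
      rw [ZMod.natCast_self] at h5
      push_cast at h5 ⊢
      linear_combination h5
    rw [Nat.factorial_succ (p - 1 - (i+1))] at ih'
    push_cast at ih' ⊢
    rw [hc] at ih'
    rw [pow_succ, Nat.factorial_succ]
    push_cast
    linear_combination (-1 : ZMod p) * ih'

lemma A_succ (n : ℕ) :
    A p (n + 1) = A p n + (-1 : ZMod p) ^ (n + 1) * (((n+1).factorial : ZMod p))⁻¹ := by
  rw [A, Finset.sum_range_succ]; rfl

lemma A_zero : A p 0 = 1 := by simp [A]

lemma w_top : w p (p - 1) = -1 := by
  rw [w, Nat.sub_self, A_zero, mul_one, ZMod.wilsons_lemma]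
  exact inv_neg_one

lemma neg_one_pow_inv (k : ℕ) : ((-1 : ZMod p) ^ k)⁻¹ = (-1 : ZMod p) ^ k := by
  rw [← inv_pow, inv_neg, inv_one]

lemma w_shift (hodd : Odd p) {i : ℕ} (h : i + 1 ≤ p - 1) :
    w p i = ((i : ZMod p) + 1) * w p (i + 1) - 1 := by
  have hp2 := (Fact.out : p.Prime).two_le
  have h1 : p - 1 - i = (p - 1 - (i + 1)) + 1 := by omega
  have hi1 : ((i : ZMod p) + 1) ≠ 0 := by
    have := natCast_ne_zero p (i := i + 1) (by omega) (by omega)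
    push_cast at this
    exact this
  have key : ((i.factorial : ℕ) : ZMod p)⁻¹
      = ((i : ZMod p) + 1) * (((i+1).factorial : ℕ) : ZMod p)⁻¹ := by
    have hf : (((i+1).factorial : ℕ) : ZMod p) = ((i:ZMod p)+1) * ((i.factorial : ℕ) : ZMod p) := by
      rw [Nat.factorial_succ]; push_cast; ring
    rw [hf, mul_inv, ← mul_assoc, mul_inv_cancel₀ hi1, one_mul]
  have e1 : w p i = ((i.factorial : ℕ) : ZMod p)⁻¹ * A p (p - 1 - (i+1))
      + (-1 : ZMod p)^(p-1-i)
        * (((i.factorial : ℕ) : ZMod p) * (((p-1-i).factorial : ℕ) : ZMod p))⁻¹ := by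
    rw [w, h1, A_succ, mul_add, mul_inv]
    have h2 : p - 1 - (i+1) + 1 = p - 1 - i := by omega
    rw [h2]
    ring
  have e2 : (((i.factorial : ℕ) : ZMod p) * (((p-1-i).factorial : ℕ) : ZMod p))⁻¹
      = (-1 : ZMod p)^(i+1) := by
    rw [fact_mul_fact p (by omega), neg_one_pow_inv]
  have e3 : (-1 : ZMod p)^(p-1-i) * (-1 : ZMod p)^(i+1) = -1 := by
    rw [← pow_add]
    have h4 : p - 1 - i + (i+1) = p := by omega
    rw [h4]
    exact hodd.neg_one_pow
  rw [e1, e2, e3, w, key]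
  ring

lemma sum_range_cast {M : Type*} [AddCommMonoid M] (f : ZMod p → M) :
    ∑ i ∈ Finset.range p, f (i : ZMod p) = ∑ x : ZMod p, f x := by
  have hinj : Set.InjOn (fun i : ℕ => (i : ZMod p)) (Finset.range p) := by
    intro a ha b hb hab
    have ha' := Finset.mem_range.mp ha
    have hb' := Finset.mem_range.mp hb
    have := congrArg ZMod.val hab
    rwa [ZMod.val_cast_of_lt ha', ZMod.val_cast_of_lt hb'] at this
  have himg : (Finset.range p).image (fun i : ℕ => (i : ZMod p)) = Finset.univ := by
    apply Finset.eq_univ_of_card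
    rw [Finset.card_image_of_injOn hinj, Finset.card_range, ZMod.card]
  rw [← himg, Finset.sum_image (fun a ha b hb => hinj ha hb)]

lemma sum_range_pow_eq_zero {k : ℕ} (hk : k < p - 1) :
    ∑ i ∈ Finset.range p, (i : ZMod p) ^ k = 0 := by
  rw [sum_range_cast p (fun x => x ^ k)]
  apply FiniteField.sum_pow_lt_card_sub_one
  rwa [ZMod.card]

lemma sum_triangle {M : Type*} [AddCommMonoid M] (n : ℕ) (f : ℕ → ℕ → M) :
    ∑ i ∈ range n, ∑ s ∈ range (n - i), f i s
      = ∑ j ∈ range n, ∑ s ∈ range (j + 1), f (j - s) s := by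
  rw [Finset.sum_sigma', Finset.sum_sigma']
  apply Finset.sum_nbij' (i := fun x => (⟨x.1 + x.2, x.2⟩ : Σ _ : ℕ, ℕ))
    (j := fun x => (⟨x.1 - x.2, x.2⟩ : Σ _ : ℕ, ℕ))
  · rintro ⟨x, y⟩ ha
    dsimp only
    simp only [Finset.mem_sigma, Finset.mem_range] at ha ⊢
    omega
  · rintro ⟨x, y⟩ ha
    dsimp only
    simp only [Finset.mem_sigma, Finset.mem_range] at ha ⊢
    omega
  · rintro ⟨x, y⟩ ha
    simp only [Finset.mem_sigma, Finset.mem_range] at ha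
    dsimp only
    rw [Nat.add_sub_cancel]
  · rintro ⟨x, y⟩ ha
    simp only [Finset.mem_sigma, Finset.mem_range] at ha
    dsimp only
    rw [Nat.sub_add_cancel (by omega)]
  · rintro ⟨x, y⟩ ha
    dsimp only
    simp only [Finset.mem_sigma, Finset.mem_range] at ha
    congr 1
    omega

lemma V_zero : V p 0 = 1 := by
  have hp2 := (Fact.out : p.Prime).two_le
  have h1 : V p 0 = ∑ i ∈ range p, ∑ s ∈ range (p - i),
      ((i.factorial : ℕ) : ZMod p)⁻¹ * ((-1 : ZMod p) ^ s * ((s.factorial : ℕ) : ZMod p)⁻¹) := by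
    rw [V]
    apply Finset.sum_congr rfl
    intro i hi
    have hi' := Finset.mem_range.mp hi
    rw [pow_zero, mul_one, w, A, Finset.mul_sum]
    have : p - 1 - i + 1 = p - i := by omega
    rw [this]
  rw [h1, sum_triangle]
  have h2 : ∀ j ∈ range p, ∑ s ∈ range (j + 1),
      (((j - s).factorial : ℕ) : ZMod p)⁻¹ * ((-1 : ZMod p) ^ s * ((s.factorial : ℕ) : ZMod p)⁻¹)
      = (if j = 0 then 1 else 0) * ((j.factorial : ℕ) : ZMod p)⁻¹ := by
    intro j hj
    have hj' := Finset.mem_range.mp hj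
    have h3 : ∀ s ∈ range (j + 1),
        (((j - s).factorial : ℕ) : ZMod p)⁻¹ * ((-1 : ZMod p) ^ s * ((s.factorial : ℕ) : ZMod p)⁻¹)
        = ((-1 : ZMod p) ^ s * (j.choose s : ZMod p)) * ((j.factorial : ℕ) : ZMod p)⁻¹ := by
      intro s hs
      have hs' : s ≤ j := by
        have := Finset.mem_range.mp hs
        omega
      have hchoose : ((j.choose s : ℕ) : ZMod p) * ((s.factorial : ℕ) : ZMod p)
          * (((j - s).factorial : ℕ) : ZMod p) = ((j.factorial : ℕ) : ZMod p) := by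
        rw [← Nat.cast_mul, ← Nat.cast_mul, Nat.choose_mul_factorial_mul_factorial hs']
      have hfs : ((s.factorial : ℕ) : ZMod p) ≠ 0 := fact_ne_zero p (by omega)
      have hfjs : (((j - s).factorial : ℕ) : ZMod p) ≠ 0 := fact_ne_zero p (by omega)
      have hfj : ((j.factorial : ℕ) : ZMod p) ≠ 0 := fact_ne_zero p (by omega)
      have hc0 : ((j.choose s : ℕ) : ZMod p) ≠ 0 := by
        intro h0
        rw [h0, zero_mul, zero_mul] at hchoose
        exact hfj hchoose.symm
      rw [← hchoose, mul_inv, mul_inv]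
      have hcc : ((j.choose s : ℕ) : ZMod p) * (((j.choose s : ℕ) : ZMod p))⁻¹ = 1 :=
        mul_inv_cancel₀ hc0
      linear_combination (-(-1 : ZMod p)^s * ((s.factorial : ℕ) : ZMod p)⁻¹
        * (((j - s).factorial : ℕ) : ZMod p)⁻¹) * hcc
    rw [Finset.sum_congr rfl h3, ← Finset.sum_mul]
    congr 1
    have := Int.alternating_sum_range_choose (n := j)
    calc ∑ s ∈ range (j + 1), (-1 : ZMod p) ^ s * (j.choose s : ZMod p)
        = ((∑ s ∈ range (j + 1), (-1 : ℤ) ^ s * (j.choose s : ℤ) : ℤ) : ZMod p) := by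
          push_cast; rfl
      _ = (if j = 0 then 1 else 0) := by rw [this]; split <;> simp
  rw [Finset.sum_congr rfl h2]
  simp only [ite_mul, one_mul, zero_mul]
  rw [Finset.sum_ite_eq' (range p) 0 (fun j => ((j.factorial : ℕ) : ZMod p)⁻¹)]
  simp only [Finset.mem_range]
  rw [if_pos (by omega)]
  simp

lemma shift_sum (hodd : Odd p) {k : ℕ} (hk : k ≤ p - 2) :
    ∑ i ∈ range p, w p i * ((i : ZMod p) + 1) ^ k = V p (k + 1) := by
  have hp2 := (Fact.out : p.Prime).two_le
  have hp1 : p - 1 + 1 = p := by omega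
  have e0 := Finset.sum_range_succ (fun i => w p i * ((i : ZMod p) + 1) ^ k) (p - 1)
  rw [hp1] at e0
  have elast : ((p - 1 : ℕ) : ZMod p) + 1 = 0 := by
    have h5 : ((p - 1 + 1 : ℕ) : ZMod p) = 0 := by rw [hp1, ZMod.natCast_self]
    push_cast at h5
    exact h5
  rw [e0, elast, w_top]
  have emain : ∀ i ∈ range (p - 1), w p i * ((i : ZMod p) + 1) ^ k
      = w p (i + 1) * ((i : ZMod p) + 1) ^ (k + 1) - ((i : ZMod p) + 1) ^ k := by
    intro i hi
    have hi' := Finset.mem_range.mp hi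
    rw [w_shift p hodd (by omega), pow_succ]
    ring
  rw [Finset.sum_congr rfl emain, Finset.sum_sub_distrib]
  have e1 : ∑ i ∈ range (p - 1), w p (i + 1) * ((i : ZMod p) + 1) ^ (k + 1)
      = V p (k + 1) - w p 0 * (0 : ZMod p) ^ (k + 1) := by
    have h := Finset.sum_range_succ' (fun i => w p i * (i : ZMod p) ^ (k + 1)) (p - 1)
    rw [hp1] at h
    rw [V, h, Nat.cast_zero]
    have h2 : ∀ i ∈ range (p - 1), w p (i + 1) * (((i + 1 : ℕ)) : ZMod p) ^ (k + 1)
        = w p (i + 1) * ((i : ZMod p) + 1) ^ (k + 1) := by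
      intro i _
      push_cast
      ring
    rw [Finset.sum_congr rfl h2]
    ring
  have e2 : ∑ i ∈ range (p - 1), ((i : ZMod p) + 1) ^ k = - (0 : ZMod p) ^ k := by
    have h := Finset.sum_range_succ' (fun i => (i : ZMod p) ^ k) (p - 1)
    rw [hp1, sum_range_pow_eq_zero p (by omega)] at h
    have h2 : ∀ i ∈ range (p - 1), (((i + 1 : ℕ)) : ZMod p) ^ k
        = ((i : ZMod p) + 1) ^ k := by
      intro i _
      push_cast
      ring
    rw [Finset.sum_congr rfl h2, Nat.cast_zero] at h
    linear_combination -h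
  rw [e1, e2, zero_pow (Nat.succ_ne_zero k)]
  ring

lemma bell_eq_V (hodd : Odd p) : ∀ k, k ≤ p - 1 → (bell k : ZMod p) = V p k := by
  intro k
  induction k using Nat.strong_induction_on with
  | _ k ih =>
    match k with
    | 0 =>
      intro _
      rw [V_zero]
      simp [bell]
    | (n + 1) =>
      intro hk
      rw [bell_succ]
      push_cast
      have e1 : ∀ j ∈ range (n + 1), ((n.choose j : ℕ) : ZMod p) * ((bell j : ℕ) : ZMod p)
          = ((n.choose j : ℕ) : ZMod p) * V p j := by
        intro j hj
        have hj' := Finset.mem_range.mp hj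
        rw [ih j (by omega) (by omega)]
      rw [Finset.sum_congr rfl e1]
      have e2 : ∑ j ∈ range (n + 1), ((n.choose j : ℕ) : ZMod p) * V p j
          = ∑ i ∈ range p, w p i * ((i : ZMod p) + 1) ^ n := by
        calc ∑ j ∈ range (n + 1), ((n.choose j : ℕ) : ZMod p) * V p j
            = ∑ j ∈ range (n + 1), ∑ i ∈ range p,
                w p i * ((i : ZMod p) ^ j * 1 ^ (n - j) * (n.choose j : ZMod p)) := by
              apply Finset.sum_congr rfl
              intro j _
              rw [V, Finset.mul_sum]
              apply Finset.sum_congr rfl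
              intro i _
              push_cast
              ring
          _ = ∑ i ∈ range p, ∑ j ∈ range (n + 1),
                w p i * ((i : ZMod p) ^ j * 1 ^ (n - j) * (n.choose j : ZMod p)) :=
              Finset.sum_comm
          _ = ∑ i ∈ range p, w p i * ((i : ZMod p) + 1) ^ n := by
              apply Finset.sum_congr rfl
              intro i _
              rw [← Finset.mul_sum, add_pow]
      rw [e2, shift_sum p hodd (by omega)]

lemma geom_sum_Icc (y : ZMod p) :
    ∑ k ∈ Finset.Icc 1 (p - 1), y ^ k = if y = 1 then -1 else 0 := by
  have hp2 := (Fact.out : p.Prime).two_le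
  have hIcc : Finset.Icc 1 (p - 1) = Finset.Ico 1 p := by
    rw [← Finset.Ico_add_one_right_eq_Icc]
    congr 1
    omega
  have hsplit : ∑ k ∈ range p, y ^ k = y ^ 0 + ∑ k ∈ Finset.Ico 1 p, y ^ k := by
    rw [Finset.range_eq_Ico, Finset.sum_eq_sum_Ico_succ_bot (by omega : 0 < p)]
  rw [hIcc]
  split_ifs with h
  · subst h
    simp only [one_pow, Finset.sum_const, nsmul_eq_mul, mul_one, Nat.card_Ico]
    have h5 : ((p - 1 + 1 : ℕ) : ZMod p) = 0 := by
      rw [Nat.sub_add_cancel (by omega), ZMod.natCast_self]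
    push_cast at h5
    linear_combination h5
  · have hfull : ∑ k ∈ range p, y ^ k = 1 := by
      rw [geom_sum_eq h, ZMod.pow_card]
      rw [div_self (sub_ne_zero.mpr h)]
    rw [hfull, pow_zero] at hsplit
    linear_combination -hsplit

lemma A_eq {n : ℕ} (h : n < p) :
    A p n = (numDerangements n : ZMod p) * ((n.factorial : ℕ) : ZMod p)⁻¹ := by
  induction n with
  | zero => simp [A_zero]
  | succ n ihn =>
    rw [A_succ, ihn (by omega)]
    have hd : ((numDerangements (n + 1) : ℕ) : ZMod p)
        = ((n : ZMod p) + 1) * (numDerangements n : ZMod p) - (-1) ^ n := by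
      have h1 := congrArg (fun z : ℤ => (z : ZMod p)) (numDerangements_succ n)
      push_cast at h1
      linear_combination h1
    have hn1 : ((n : ZMod p) + 1) ≠ 0 := by
      have := natCast_ne_zero p (i := n + 1) (by omega) (by omega)
      push_cast at this
      exact this
    have hf : (((n + 1).factorial : ℕ) : ZMod p)
        = ((n : ZMod p) + 1) * ((n.factorial : ℕ) : ZMod p) := by
      rw [Nat.factorial_succ]
      push_cast
      ring
    have hcc : ((n : ZMod p) + 1) * ((n : ZMod p) + 1)⁻¹ = 1 := mul_inv_cancel₀ hn1
    rw [hd, hf, mul_inv]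
    linear_combination (-((numDerangements n : ZMod p) * ((n.factorial : ℕ) : ZMod p)⁻¹)) * hcc

noncomputable def E (n : ℕ) : ZMod p := (-1 : ZMod p) ^ n * (numDerangements n : ZMod p)

lemma E_succ (n : ℕ) : E p (n + 1) = -((n : ZMod p) + 1) * E p n + 1 := by
  rw [E, E]
  have hd : ((numDerangements (n + 1) : ℕ) : ZMod p)
      = ((n : ZMod p) + 1) * (numDerangements n : ZMod p) - (-1) ^ n := by
    have h1 := congrArg (fun z : ℤ => (z : ZMod p)) (numDerangements_succ n)
    push_cast at h1
    linear_combination h1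
  have hsq : (-1 : ZMod p) ^ n * (-1 : ZMod p) ^ n = 1 := by
    rw [← mul_pow]
    simp
  rw [hd]
  linear_combination hsq

lemma E_add_p (n : ℕ) : E p (n + p) = E p n := by
  have hp2 := (Fact.out : p.Prime).two_le
  induction n with
  | zero =>
    rw [zero_add]
    have h2 : E p p = E p ((p - 1) + 1) := by rw [Nat.sub_add_cancel (by omega)]
    rw [h2, E_succ]
    have h5 : ((p - 1 : ℕ) : ZMod p) + 1 = 0 := by
      have h6 : ((p - 1 + 1 : ℕ) : ZMod p) = 0 := by
        rw [Nat.sub_add_cancel (by omega), ZMod.natCast_self]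
      push_cast at h6
      exact h6
    rw [h5]
    have h7 : E p 0 = 1 := by rw [E]; simp
    rw [h7]
    ring
  | succ n ih =>
    have h1 : n + 1 + p = (n + p) + 1 := by omega
    rw [h1, E_succ, ih, E_succ]
    have hc : ((n + p : ℕ) : ZMod p) = (n : ZMod p) := by
      push_cast [ZMod.natCast_self]
      ring
    rw [hc]

lemma E_add_mul (a q : ℕ) : E p (a + p * q) = E p a := by
  induction q with
  | zero => simp
  | succ q ih =>
    have h1 : a + p * (q + 1) = (a + p * q) + p := by ring
    rw [h1, E_add_p, ih]

lemma E_mod (n : ℕ) : E p n = E p (n % p) := by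
  conv_lhs => rw [← Nat.mod_add_div n p]
  rw [E_add_mul]

lemma lhs_eq (hodd : Odd p) (m : ℕ) (hm : 0 < m) (hpm : ¬ p ∣ m) :
    ∑ k ∈ Finset.Icc 1 (p - 1), (bell k : ZMod p) * (-(m : ZMod p))⁻¹ ^ k
      = (-1 : ZMod p) ^ (m % p - 1) * (numDerangements (m % p - 1) : ZMod p) := by
  have hp2 := (Fact.out : p.Prime).two_le
  have hm1 : 1 ≤ m % p := by
    rcases Nat.eq_zero_or_pos (m % p) with h | h
    · exact absurd (Nat.dvd_of_mod_eq_zero h) hpm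
    · exact h
  have hm2 : m % p < p := Nat.mod_lt _ (by omega)
  have hmz : ((m : ℕ) : ZMod p) ≠ 0 := by
    rw [Ne, ZMod.natCast_eq_zero_iff]
    exact hpm
  have hneg : (-(m : ZMod p)) ≠ 0 := neg_ne_zero.mpr hmz
  set t : ZMod p := (-(m : ZMod p))⁻¹ with ht
  have htz : t ≠ 0 := inv_ne_zero hneg
  set r : ℕ := (-(m : ZMod p)).val with hrdef
  have hrp : r < p := ZMod.val_lt _
  have hrcast : ((r : ℕ) : ZMod p) = -(m : ZMod p) := ZMod.natCast_zmod_val _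
  have hr : r = p - m % p := by
    rw [hrdef, ZMod.neg_val, if_neg hmz, ZMod.val_natCast]
  have s1 : ∑ k ∈ Finset.Icc 1 (p - 1), (bell k : ZMod p) * t ^ k
      = ∑ k ∈ Finset.Icc 1 (p - 1), V p k * t ^ k := by
    apply Finset.sum_congr rfl
    intro k hk
    rw [bell_eq_V p hodd k (Finset.mem_Icc.mp hk).2]
  have s2 : ∑ k ∈ Finset.Icc 1 (p - 1), V p k * t ^ k
      = ∑ i ∈ range p, w p i * ∑ k ∈ Finset.Icc 1 (p - 1), ((i : ZMod p) * t) ^ k := by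
    calc ∑ k ∈ Finset.Icc 1 (p - 1), V p k * t ^ k
        = ∑ k ∈ Finset.Icc 1 (p - 1), ∑ i ∈ range p, w p i * ((i : ZMod p) * t) ^ k := by
          apply Finset.sum_congr rfl
          intro k _
          rw [V, Finset.sum_mul]
          apply Finset.sum_congr rfl
          intro i _
          rw [mul_pow]
          ring
      _ = ∑ i ∈ range p, ∑ k ∈ Finset.Icc 1 (p - 1), w p i * ((i : ZMod p) * t) ^ k :=
          Finset.sum_comm
      _ = _ := by
          apply Finset.sum_congr rfl
          intro i _
          rw [Finset.mul_sum]
  have s3 : ∑ i ∈ range p, w p i * ∑ k ∈ Finset.Icc 1 (p - 1), ((i : ZMod p) * t) ^ k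
      = ∑ i ∈ range p, (if i = r then -(w p i) else 0) := by
    apply Finset.sum_congr rfl
    intro i hi
    have hi' := Finset.mem_range.mp hi
    rw [geom_sum_Icc]
    have hcond : ((i : ZMod p) * t = 1) ↔ i = r := by
      constructor
      · intro h
        have h3 : (i : ZMod p) = t⁻¹ := by
          field_simp at h ⊢
          linear_combination h
        rw [ht, inv_inv] at h3
        have h4 := congrArg ZMod.val h3
        rwa [ZMod.val_cast_of_lt hi'] at h4
      · intro h
        subst h
        rw [hrcast, ht]
        exact mul_inv_cancel₀ hneg
    rw [if_congr hcond rfl rfl]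
    split <;> ring
  have s4 : ∑ i ∈ range p, (if i = r then -(w p i) else 0) = -(w p r) := by
    rw [Finset.sum_ite_eq' (range p) r (fun i => -(w p i))]
    rw [if_pos (Finset.mem_range.mpr hrp)]
  have hsub : p - 1 - r = m % p - 1 := by omega
  have hA : A p (m % p - 1)
      = (numDerangements (m % p - 1) : ZMod p) * (((m % p - 1).factorial : ℕ) : ZMod p)⁻¹ :=
    A_eq p (by omega)
  have hmf := fact_mul_fact p (i := m % p - 1) (by omega)
  have hre : p - 1 - (m % p - 1) = r := by omega
  have hexp : (m % p - 1) + 1 = m % p := by omega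
  rw [hre, hexp] at hmf
  have hfr0 : (((m % p - 1).factorial : ℕ) : ZMod p) ≠ 0 := fact_ne_zero p (by omega)
  have hfr : ((r.factorial : ℕ) : ZMod p)⁻¹
      = (-1 : ZMod p) ^ (m % p) * (((m % p - 1).factorial : ℕ) : ZMod p) := by
    apply inv_eq_of_mul_eq_one_left
    calc (-1 : ZMod p) ^ (m % p) * (((m % p - 1).factorial : ℕ) : ZMod p)
          * ((r.factorial : ℕ) : ZMod p)
        = (-1 : ZMod p) ^ (m % p)
          * ((((m % p - 1).factorial : ℕ) : ZMod p) * ((r.factorial : ℕ) : ZMod p)) := by ring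
      _ = (-1 : ZMod p) ^ (m % p) * (-1 : ZMod p) ^ (m % p) := by rw [hmf]
      _ = 1 := by rw [← mul_pow]; simp
  have hsign : (-1 : ZMod p) ^ (m % p) = (-1 : ZMod p) ^ (m % p - 1) * (-1) := by
    rw [← pow_succ, hexp]
  have hcc : (((m % p - 1).factorial : ℕ) : ZMod p)
      * ((((m % p - 1).factorial : ℕ) : ZMod p))⁻¹ = 1 := mul_inv_cancel₀ hfr0
  calc ∑ k ∈ Finset.Icc 1 (p - 1), (bell k : ZMod p) * t ^ k
      = -(w p r) := by rw [s1, s2, s3, s4]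
    _ = _ := by
        rw [w, hsub, hA, hfr, hsign]
        linear_combination ((-1 : ZMod p) ^ (m % p - 1)
          * (numDerangements (m % p - 1) : ZMod p)) * hcc

lemma rhs_eq (m : ℕ) (hm : 0 < m) (hpm : ¬ p ∣ m) :
    (-1 : ZMod p) ^ (m - 1) * (numDerangements (m - 1) : ZMod p)
      = (-1 : ZMod p) ^ (m % p - 1) * (numDerangements (m % p - 1) : ZMod p) := by
  have hp2 := (Fact.out : p.Prime).two_le
  have hm1 : 1 ≤ m % p := by
    rcases Nat.eq_zero_or_pos (m % p) with h | h
    · exact absurd (Nat.dvd_of_mod_eq_zero h) hpm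
    · exact h
  have hm2 : m % p < p := Nat.mod_lt _ (by omega)
  have e1 : E p (m - 1) = E p ((m - 1) % p) := E_mod p (m - 1)
  have e2 : (m - 1) % p = m % p - 1 := by
    have h3 : m - 1 = p * (m / p) + (m % p - 1) := by
      have h4 := Nat.div_add_mod m p
      omega
    rw [h3, Nat.mul_add_mod, Nat.mod_eq_of_lt (by omega)]
  rw [e2] at e1
  rw [E, E] at e1
  exact e1

end SZ

/-- Sun–Zagier: for every positive integer `m` and every prime `p ∤ m`,
`∑_{k=1}^{p-1} B_k·(-m)^{-k} ≡ (-1)^{m-1}·S_{m-1} (mod p)`. -/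
theorem sun_zagier (m p : ℕ) (hm : 0 < m) (hp : p.Prime) (hpm : ¬ p ∣ m) :
    ∑ k ∈ Finset.Icc 1 (p - 1), (bell k : ZMod p) * (-(m : ZMod p))⁻¹ ^ k =
      (-1 : ZMod p) ^ (m - 1) * (numDerangements (m - 1) : ZMod p) := by
  haveI : Fact p.Prime := ⟨hp⟩
  rw [SZ.rhs_eq p m hm hpm]
  rcases eq_or_ne p 2 with h2 | h2
  · subst h2
    have hmod : m % 2 = 1 := by
      rcases Nat.mod_two_eq_zero_or_one m with h | h
      · exact absurd (Nat.dvd_of_mod_eq_zero h) hpm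
      · exact h
    have hb1 : bell 1 = 1 := by rw [bell_succ]; simp [bell]
    have hcast : (m : ZMod 2) = 1 := by
      have h3 : ((m % 2 : ℕ) : ZMod 2) = (m : ZMod 2) := ZMod.natCast_mod m 2 ▸ rfl
      rw [← h3, hmod, Nat.cast_one]
    have hIcc : Finset.Icc 1 (2 - 1) = {1} := rfl
    rw [hIcc, Finset.sum_singleton, hb1, hcast, hmod]
    norm_num [numDerangements]
    exact CharTwo.neg_eq 1
  · exact SZ.lhs_eq p (hp.odd_of_ne_two h2) m hm hpm
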